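/- Let M ≥ 1 be an integer, let N_0, N_1, …, N_M be nonnegative real numbers, and let c, n ≥ 0 be real numbers such that Σ_{j=0}^{k} N_j ≤ c·n·k² for every integer k with 1 ≤ k ≤ M. Then Σ_{k=0}^{M} 6·N_k/((k+1)(k+2)(k+3)) ≤ 36·c·n. -/

import Mathlib

/-- If partial sums satisfy `∑_{j=0}^k N_j ≤ c n k²` for `1 ≤ k ≤ M`,
then `∑_{k=0}^M 6 N_k /((k+1)(k+2)(k+3)) ≤ 36 c n`. -/
theorem weighted_sum_pure_bound
    (M : ℕ) (hM : 1 ≤ M) (N : ℕ → ℝ) (hN : ∀ k, k ≤ M → 0 ≤ N k)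
    (c n : ℝ) (hc : 0 ≤ c) (hn : 0 ≤ n)
    (hsum : ∀ k : ℕ, 1 ≤ k → k ≤ M →
      ∑ j ∈ Finset.range (k + 1), N j ≤ c * n * (k : ℝ) ^ 2) :
    ∑ k ∈ Finset.range (M + 1),
        6 * N k / (((k : ℝ) + 1) * ((k : ℝ) + 2) * ((k : ℝ) + 3)) ≤ 36 * c * n := by
  set w : ℕ → ℝ := fun k => 6 / (((k : ℝ) + 1) * ((k : ℝ) + 2) * ((k : ℝ) + 3)) with hw
  have hrw : ∑ k ∈ Finset.range (M + 1),
        6 * N k / (((k : ℝ) + 1) * ((k : ℝ) + 2) * ((k : ℝ) + 3))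
      = ∑ k ∈ Finset.range (M + 1), w k • N k := by
    apply Finset.sum_congr rfl
    intro k _
    simp [hw, smul_eq_mul]
    ring
  rw [hrw, Finset.sum_range_by_parts w N (M + 1)]
  simp only [Nat.add_sub_cancel, smul_eq_mul]
  -- S i := ∑ j ∈ range (i+1), N j
  set S : ℕ → ℝ := fun i => ∑ j ∈ Finset.range (i + 1), N j with hS
  have hSnonneg : ∀ i, i ≤ M → 0 ≤ S i := by
    intro i hi
    apply Finset.sum_nonneg
    intro j hj
    exact hN j (le_trans (Nat.lt_succ_iff.mp (Finset.mem_range.mp hj)) hi)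
  have hSbound : ∀ i, i ≤ M → S i ≤ c * n * ((max i 1 : ℕ) : ℝ) ^ 2 := by
    intro i hi
    rcases Nat.eq_zero_or_pos i with h0 | h1
    · subst h0
      have h01 : S 1 = S 0 + N 1 := Finset.sum_range_succ N 1
      have h1 := hN 1 hM
      have h2 : S 1 ≤ c * n := by
        have := hsum 1 le_rfl hM
        simpa using this
      have hmax : (((max 0 1 : ℕ) : ℝ)) ^ 2 = 1 := by norm_num
      rw [hmax, mul_one]
      linarith
    · have : max i 1 = i := max_eq_left h1
      rw [this]
      exact hsum i h1 hi
  -- Bound the boundary term: w M * S M ≤ 6 c n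
  have hwM : w M * S M ≤ 6 * (c * n) := by
    have hSM := hSbound M le_rfl
    have hmax : max M 1 = M := max_eq_left hM
    rw [hmax] at hSM
    have hpos : (0:ℝ) < ((M:ℝ) + 1) * ((M:ℝ) + 2) * ((M:ℝ) + 3) := by positivity
    have hSM0 := hSnonneg M le_rfl
    have hwMnn : 0 ≤ w M := by positivity
    have h1 : w M * S M ≤ w M * (c * n * (M:ℝ)^2) := by
      exact mul_le_mul_of_nonneg_left hSM hwMnn
    have h2 : w M * (c * n * (M:ℝ)^2) ≤ 6 * (c * n) := by
      rw [hw]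
      rw [div_mul_eq_mul_div, div_le_iff₀ hpos]
      have hcn : 0 ≤ c * n := mul_nonneg hc hn
      nlinarith [sq_nonneg ((M:ℝ)), hcn, mul_nonneg hcn (sq_nonneg ((M:ℝ)))]
    linarith
  -- Bound each term of the subtracted sum
  have hterm : ∀ i, i < M →
      -((w (i + 1) - w i) * S i) ≤ 18 * (c * n) * (1 / ((i:ℝ) + 1) - 1 / ((i:ℝ) + 2)) := by
    intro i hi
    have hiM : i ≤ M := le_of_lt hi
    have hdiff : w i - w (i + 1)
        = 18 / (((i:ℝ)+1) * ((i:ℝ)+2) * ((i:ℝ)+3) * ((i:ℝ)+4)) := by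
      rw [hw]
      push_cast
      have h1 : ((i:ℝ)+1) ≠ 0 := by positivity
      have h2 : ((i:ℝ)+2) ≠ 0 := by positivity
      have h3 : ((i:ℝ)+3) ≠ 0 := by positivity
      have h4 : ((i:ℝ)+4) ≠ 0 := by positivity
      field_simp
      ring
    have key : (w i - w (i + 1)) * S i ≤ 18 * (c * n) * (1 / ((i:ℝ) + 1) - 1 / ((i:ℝ) + 2)) := by
      rw [hdiff]
      have hD : (0:ℝ) < ((i:ℝ)+1) * ((i:ℝ)+2) * ((i:ℝ)+3) * ((i:ℝ)+4) := by positivity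
      have hSb := hSbound i hiM
      have step1 : 18 / (((i:ℝ)+1) * ((i:ℝ)+2) * ((i:ℝ)+3) * ((i:ℝ)+4)) * S i
          ≤ 18 / (((i:ℝ)+1) * ((i:ℝ)+2) * ((i:ℝ)+3) * ((i:ℝ)+4)) *
            (c * n * ((max i 1 : ℕ) : ℝ) ^ 2) := by
        apply mul_le_mul_of_nonneg_left hSb
        positivity
      have htel : 1 / ((i:ℝ) + 1) - 1 / ((i:ℝ) + 2) = 1 / (((i:ℝ)+1) * ((i:ℝ)+2)) := by
        have h1 : ((i:ℝ)+1) ≠ 0 := by positivity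
        have h2 : ((i:ℝ)+2) ≠ 0 := by positivity
        field_simp
        ring
      have hcn : 0 ≤ c * n := mul_nonneg hc hn
      have hm2 : (((max i 1 : ℕ) : ℝ)) ^ 2 ≤ ((i:ℝ)+3) * ((i:ℝ)+4) := by
        rcases Nat.eq_zero_or_pos i with h0 | h1
        · subst h0; norm_num
        · have : max i 1 = i := max_eq_left h1
          rw [this]
          nlinarith [Nat.cast_nonneg (α := ℝ) i]
      have step2 : 18 / (((i:ℝ)+1) * ((i:ℝ)+2) * ((i:ℝ)+3) * ((i:ℝ)+4)) *
            (c * n * ((max i 1 : ℕ) : ℝ) ^ 2)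
          ≤ 18 * (c * n) * (1 / (((i:ℝ)+1) * ((i:ℝ)+2))) := by
        rw [div_mul_eq_mul_div, div_le_iff₀ hD]
        have expand : 18 * (c * n) * (1 / (((i:ℝ)+1) * ((i:ℝ)+2))) *
            (((i:ℝ)+1) * ((i:ℝ)+2) * ((i:ℝ)+3) * ((i:ℝ)+4))
            = 18 * (c * n) * (((i:ℝ)+3) * ((i:ℝ)+4)) := by
          field_simp
        rw [expand]
        nlinarith [mul_nonneg hcn (sub_nonneg.mpr hm2)]
      calc 18 / (((i:ℝ)+1) * ((i:ℝ)+2) * ((i:ℝ)+3) * ((i:ℝ)+4)) * S i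
          ≤ 18 * (c * n) * (1 / (((i:ℝ)+1) * ((i:ℝ)+2))) := le_trans step1 step2
        _ = 18 * (c * n) * (1 / ((i:ℝ) + 1) - 1 / ((i:ℝ) + 2)) := by rw [htel]
    nlinarith [key]
  -- Sum the telescoping bound
  have hsum2 : ∑ i ∈ Finset.range M, -((w (i + 1) - w i) * S i)
      ≤ ∑ i ∈ Finset.range M, (18 * (c * n) * (1 / ((i:ℝ) + 1) - 1 / ((i:ℝ) + 2))) := by
    apply Finset.sum_le_sum
    intro i hi
    exact hterm i (Finset.mem_range.mp hi)
  have htelsum : ∑ i ∈ Finset.range M, (18 * (c * n) * (1 / ((i:ℝ) + 1) - 1 / ((i:ℝ) + 2)))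
      = 18 * (c * n) * (1 - 1 / ((M:ℝ) + 1)) := by
    rw [← Finset.mul_sum]
    congr 1
    have h2 : ∀ i : ℕ, (1:ℝ) / ((i:ℝ)+1) - 1/((i:ℝ)+2)
        = (fun j : ℕ => 1/((j:ℝ)+1)) i - (fun j : ℕ => 1/((j:ℝ)+1)) (i+1) := by
      intro i; push_cast; ring
    rw [Finset.sum_congr rfl (fun i _ => h2 i),
      Finset.sum_range_sub' (fun j : ℕ => 1/((j:ℝ)+1)) M]
    norm_num
  have hcn : 0 ≤ c * n := mul_nonneg hc hn
  have hfracnn : 0 ≤ 1 / ((M:ℝ) + 1) := by positivity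
  have hbig : -(∑ i ∈ Finset.range M, (w (i + 1) - w i) * S i) ≤ 18 * (c * n) := by
    rw [← Finset.sum_neg_distrib]
    calc ∑ i ∈ Finset.range M, -((w (i + 1) - w i) * S i)
        ≤ 18 * (c * n) * (1 - 1 / ((M:ℝ) + 1)) := by rw [← htelsum]; exact hsum2
      _ ≤ 18 * (c * n) := by nlinarith
  have hfinal : w M * S M - ∑ i ∈ Finset.range M, (w (i + 1) - w i) * S i
      ≤ 36 * c * n := by nlinarith
  exact hfinal
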